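/- Let 𝛂 be a set of directed paths in a finite directed acyclic graph G that is live for a vertex set 𝐘, and let π_{𝔞_𝛂} be a path intervention in which the paths of a subset 𝛂* ⊆ 𝛂 are assigned constant values and the paths of 𝛂∖𝛂* are assigned the natural values of their sources. If π_{𝔞_𝛂} is natural for 𝐘 (i.e. no element of rel_G(𝐘|𝛂*) with a prefix subpath in 𝛂* contains a subpath in 𝛂∖𝛂*), then in every causal structure for G the joint distribution of the responses {Y(𝔞_𝛂) : Y ∈ 𝐘} equals the joint distribution of {Y(𝔞_{𝛂*}) : Y ∈ 𝐘}, the responses to the path intervention on 𝛂* alone with the same constant assignments. -/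

import Mathlib

open scoped Classical
open MeasureTheory

namespace CausalHierarchy

variable {V : Type}

/-- A directed path in a directed graph with edge relation `edge`:
a nonempty list of vertices in which each consecutive pair is joined by an edge. -/
structure DiPath (edge : V → V → Prop) : Type where
  verts : List V
  ne : verts ≠ []
  chain : verts.Chain' edge

namespace DiPath

variable {edge : V → V → Prop}

/-- The source (first vertex) of a directed path. -/
def src (p : DiPath edge) : V := p.verts.head p.ne

/-- The sink (last vertex) of a directed path. -/
def sink (p : DiPath edge) : V := p.verts.getLast p.ne

/-- The second vertex of a directed path (junk value for single-vertex paths). -/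
def snd2 (p : DiPath edge) : V := p.verts.tail.headD p.src

/-- The first edge of a directed path, as an ordered pair of vertices. -/
def firstEdge (p : DiPath edge) : V × V := (p.src, p.snd2)

/-- `q` is a (contiguous) subpath of `p`. -/
def Subpath (q p : DiPath edge) : Prop := ∃ l r, p.verts = l ++ q.verts ++ r

/-- `q` is a prefix subpath of `p`. -/
def IsPrefix (q p : DiPath edge) : Prop := q.verts <+: p.verts

/-- `q` is a suffix subpath of `p`. -/
def IsSuffix (q p : DiPath edge) : Prop := q.verts <:+ p.verts

end DiPath

/-- A directed graph is acyclic if its transitive closure is irreflexive. -/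
def Acyclic (edge : V → V → Prop) : Prop := Irreflexive (Relation.TransGen edge)

theorem Acyclic.wf [Finite V] {edge : V → V → Prop} (h : Acyclic edge) :
    WellFounded (Relation.TransGen edge) := by
  have h1 : IsIrrefl V (Relation.TransGen edge) := ⟨h⟩
  have h2 : IsTrans V (Relation.TransGen edge) := ⟨fun _ _ _ => Relation.TransGen.trans⟩
  exact Finite.wellFounded_of_trans_of_irrefl _

/-- A set of directed paths is proper if no path in it is a prefix subpath of another. -/
def Proper {edge : V → V → Prop} (A : Set (DiPath edge)) : Prop :=
  ∀ p ∈ A, ∀ q ∈ A, p.IsPrefix q → p = q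

/-- `rel edge Y A`: the directed paths relevant for `Y` given `A`: paths with sink in `Y`
such that no member of `A` is a subpath, except possibly a prefix subpath. -/
def rel (edge : V → V → Prop) (Y : Set V) (A : Set (DiPath edge)) : Set (DiPath edge) :=
  {α | α.sink ∈ Y ∧ ∀ β ∈ A, β.Subpath α → β.IsPrefix α}

/-- A path `α` is live for `Y` given `A` if some relevant path has it as a prefix. -/
def Live (edge : V → V → Prop) (Y : Set V) (A : Set (DiPath edge)) (α : DiPath edge) : Prop :=
  ∃ p ∈ rel edge Y A, α.IsPrefix p

/-- The set of members of `A` live for `Y` given `A`. -/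
def liveSub (edge : V → V → Prop) (Y : Set V) (A : Set (DiPath edge)) : Set (DiPath edge) :=
  {α ∈ A | Live edge Y A α}

/-- `A` is live for `Y` if every member of `A` is live for `Y` given `A`. -/
def LiveSet (edge : V → V → Prop) (Y : Set V) (A : Set (DiPath edge)) : Prop :=
  ∀ α ∈ A, Live edge Y A α

/-- The funnel operator for the edge `(w,y)`: paths of the form `(a,…,w,y)` are truncated
to `(a,…,w)`, paths containing `w` not ending with the edge `(w,y)` are removed, and other
paths are kept unchanged. -/
def funnel {edge : V → V → Prop} (w y : V) (A : Set (DiPath edge)) : Set (DiPath edge) :=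
  {q | (q ∈ A ∧ w ∉ q.verts) ∨ (q.sink = w ∧ ∃ p ∈ A, p.verts = q.verts ++ [y])}

/-- `alphaSet edge A Y`: all directed paths (with at least one edge) with source in `A`,
sink in `A ∪ Y`, and not intersecting `A ∪ Y` except at the source and sink. -/
def alphaSet (edge : V → V → Prop) (A Y : Set V) : Set (DiPath edge) :=
  {p | 2 ≤ p.verts.length ∧ p.src ∈ A ∧ p.sink ∈ A ∪ Y ∧
       ∀ l₁ v l₂, p.verts = l₁ ++ v :: l₂ → v ∈ A ∪ Y → l₁ = [] ∨ l₂ = []}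

/-- The set of first edges of the (nontrivial) paths in `A`. -/
def firstEdges {edge : V → V → Prop} (A : Set (DiPath edge)) : Set (V × V) :=
  {e | ∃ p ∈ A, 2 ≤ p.verts.length ∧ e = p.firstEdge}

/-- A causal structure for the graph `(V, edge)` with state spaces `X`: a probability space
together with, for each vertex `v` and assignment of values to its parents, a random
variable (the one-step-ahead potential outcome).  The function `f v` takes a full tuple of
values but depends only on the coordinates of parents of `v`. -/
structure CausalStructure (V : Type) (edge : V → V → Prop) (X : V → Type) : Type 1 where
  Ω : Type
  m : MeasurableSpace Ω
  μ : @MeasureTheory.Measure Ω m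
  prob : μ Set.univ = 1
  f : (v : V) → ((w : V) → X w) → Ω → X v
  localDep : ∀ v x y, (∀ w, edge w v → x w = y w) → f v x = f v y

variable {X : V → Type}

/-- The natural (observed) variable of each vertex, obtained by recursive substitution with
no intervention. -/
noncomputable def observed [Finite V] {edge : V → V → Prop} [∀ v, Nonempty (X v)]
    (hG : Acyclic edge) (C : CausalStructure V edge X) (v : V) : C.Ω → X v :=
  hG.wf.fix (C := fun u => C.Ω → X u)
    (fun v IH ω => C.f v (fun w =>
      if h : Relation.TransGen edge w v then IH w h ω else Classical.arbitrary (X w)) ω) v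

/-- The response to the node intervention setting the vertices of `A` to the values `a`,
defined by recursive substitution. -/
noncomputable def nodeResp [Finite V] {edge : V → V → Prop} [∀ v, Nonempty (X v)]
    (hG : Acyclic edge) (C : CausalStructure V edge X)
    (A : Set V) (a : ∀ u, X u) (v : V) : C.Ω → X v :=
  hG.wf.fix (C := fun u => C.Ω → X u)
    (fun v IH ω => C.f v (fun w =>
      if w ∈ A then a w
      else if h : Relation.TransGen edge w v then IH w h ω
      else Classical.arbitrary (X w)) ω) v

/-- The response to the edge intervention assigning, to each edge `e ∈ E`, the value
`aE e e.1` (a value in the state space of the source of `e`), defined by recursive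
substitution. -/
noncomputable def edgeResp [Finite V] {edge : V → V → Prop} [∀ v, Nonempty (X v)]
    (hG : Acyclic edge) (C : CausalStructure V edge X)
    (E : Set (V × V)) (aE : V × V → ∀ u, X u) (v : V) : C.Ω → X v :=
  hG.wf.fix (C := fun u => C.Ω → X u)
    (fun v IH ω => C.f v (fun w =>
      if (w, v) ∈ E then aE (w, v) w
      else if h : Relation.TransGen edge w v then IH w h ω
      else Classical.arbitrary (X w)) ω) v

/-- The funneled path assignment: the truncation of a path of `A` by the funnel operator for
`(w,y)` receives the value assigned to the original path; other paths keep their values. -/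
noncomputable def funnelAssign {edge : V → V → Prop} (w y : V) (A : Set (DiPath edge))
    (a : DiPath edge → ∀ u, X u) (q : DiPath edge) : ∀ u, X u :=
  if h : q.sink = w ∧ ∃ p ∈ A, p.verts = q.verts ++ [y] then a h.2.choose else a q

/-- The response to the path intervention assigning, to each directed path `p ∈ A`, the
value `a p p.src` (a value in the state space of the source of `p`), defined by recursive
substitution via the funnel operator. -/
noncomputable def pathResp [Finite V] {edge : V → V → Prop} [∀ v, Nonempty (X v)]
    (hG : Acyclic edge) (C : CausalStructure V edge X)
    (A : Set (DiPath edge)) (a : DiPath edge → ∀ u, X u) (v : V) : C.Ω → X v :=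
  hG.wf.fix (C := fun u => Set (DiPath edge) → (DiPath edge → ∀ z, X z) → C.Ω → X u)
    (fun v IH A a ω => C.f v (fun w =>
      if h : ∃ p ∈ A, p.verts = [w, v] then a h.choose w
      else if hw : Relation.TransGen edge w v then
        IH w hw (funnel w v A) (funnelAssign w v A a) ω
      else Classical.arbitrary (X w)) ω) v A a

/-- The response to the path intervention in which the paths of `Astar ⊆ A` are assigned
the constant values `a`, and the paths of `A ∖ Astar` are assigned the natural values of
their sources, defined by recursive substitution via the funnel operator. -/
noncomputable def pathRespNat [Finite V] {edge : V → V → Prop} [∀ v, Nonempty (X v)]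
    (hG : Acyclic edge) (C : CausalStructure V edge X)
    (A Astar : Set (DiPath edge)) (a : DiPath edge → ∀ u, X u) (v : V) : C.Ω → X v :=
  hG.wf.fix (C := fun u =>
      Set (DiPath edge) → Set (DiPath edge) → (DiPath edge → ∀ z, X z) → C.Ω → X u)
    (fun v IH A Astar a ω => C.f v (fun w =>
      if h : ∃ p ∈ A, p.verts = [w, v] then
        (if h.choose ∈ Astar then a h.choose w else observed hG C w ω)
      else if hw : Relation.TransGen edge w v then
        IH w hw (funnel w v A) (funnel w v Astar) (funnelAssign w v A a) ω
      else Classical.arbitrary (X w)) ω) v A Astar a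

/-- The observed distribution `p(𝐕)`, as a probability mass function. -/
noncomputable def obsDist [Finite V] {edge : V → V → Prop} [∀ v, Nonempty (X v)]
    (hG : Acyclic edge) (C : CausalStructure V edge X) : (∀ v, X v) → ENNReal :=
  fun s => C.μ {ω | ∀ v, observed hG C v ω = s v}

/-- The single world model (Robins' FFRCISTG model): for every joint value assignment `x`,
the one-step-ahead variables `{V(x_{pa(V)}) : V ∈ 𝐕}` are mutually independent. -/
def SWM {edge : V → V → Prop} (C : CausalStructure V edge X) : Prop :=
  ∀ x : ∀ u, X u, ∀ (S : Finset V) (s : ∀ u, X u),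
    C.μ {ω | ∀ v ∈ S, C.f v x ω = s v} = ∏ v ∈ S, C.μ {ω | C.f v x ω = s v}

/-- The multiple worlds model (Pearl's NPSEM-IE): the families
`{V(x) : x an assignment to pa(V)}`, one family per vertex, are mutually independent. -/
def MWM {edge : V → V → Prop} (C : CausalStructure V edge X) : Prop :=
  ∀ (S : Finset V) (g : ∀ v, ((∀ u, X u) → X v)),
    C.μ {ω | ∀ v ∈ S, (fun x => C.f v x ω) = g v} =
      ∏ v ∈ S, C.μ {ω | (fun x => C.f v x ω) = g v}

/-- The conditional probability `p(val | values c of the parents of v)` of the observed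
distribution. -/
noncomputable def condProb [Finite V] {edge : V → V → Prop} [∀ v, Nonempty (X v)]
    (hG : Acyclic edge) (C : CausalStructure V edge X)
    (v : V) (val : X v) (c : ∀ u, X u) : ENNReal :=
  C.μ {ω | observed hG C v ω = val ∧ ∀ w, edge w v → observed hG C w ω = c w} /
    C.μ {ω | ∀ w, edge w v → observed hG C w ω = c w}

/-- A response distribution `R` is identified from `p(𝐕)` under the model `M` if any two
causal structures in `M` with the same observed distribution give it the same value. -/
def Identified [Finite V] {edge : V → V → Prop} [∀ v, Nonempty (X v)] (hG : Acyclic edge)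
    (M : CausalStructure V edge X → Prop)
    (R : CausalStructure V edge X → (∀ v, X v) → ENNReal) : Prop :=
  ∀ C₁ C₂, M C₁ → M C₂ → obsDist hG C₁ = obsDist hG C₂ → R C₁ = R C₂

/-- Paths relevant for `Y` given a set of edges `E`: sink in `Y` and no edge of `E` occurs
in the path except possibly as the first edge. -/
def relE (edge : V → V → Prop) (Y : Set V) (E : Set (V × V)) : Set (DiPath edge) :=
  {p | p.sink ∈ Y ∧ ∀ l₁ w v l₂, p.verts = l₁ ++ w :: v :: l₂ → (w, v) ∈ E → l₁ = []}

/-- A set of edges is live for `Y` if each of its edges begins some relevant path. -/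
def LiveE (edge : V → V → Prop) (Y : Set V) (E : Set (V × V)) : Prop :=
  ∀ e ∈ E, ∃ p ∈ relE edge Y E, ∃ l, p.verts = e.1 :: e.2 :: l

/-- A set of edges live for `Y` is consistent for `Y` if for every vertex `a`, the set of
first edges of relevant paths with source `a` is contained in `E` or disjoint from `E`. -/
def ConsistentE (edge : V → V → Prop) (Y : Set V) (E : Set (V × V)) : Prop :=
  ∀ a : V, (∀ p ∈ relE edge Y E, ∀ b l, p.verts = a :: b :: l → (a, b) ∈ E) ∨
           (∀ p ∈ relE edge Y E, ∀ b l, p.verts = a :: b :: l → (a, b) ∉ E)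

/-- An edge intervention is node consistent for `Y` if its edge set is live and consistent
for `Y` and all edges sharing a source are assigned the same value. -/
def NodeConsistent {X : V → Type} (edge : V → V → Prop) (Y : Set V) (E : Set (V × V))
    (aE : V × V → ∀ u, X u) : Prop :=
  LiveE edge Y E ∧ ConsistentE edge Y E ∧
    ∀ e ∈ E, ∀ e' ∈ E, e.1 = e'.1 → aE e e.1 = aE e' e.1

/-- A proper set of paths live for `Y` is consistent for `Y` if whenever the first edge of
some path of `A` occurs in a relevant path `β`, it is the first edge of a prefix subpath of
`β` belonging to `A`. -/
def ConsistentP (edge : V → V → Prop) (Y : Set V) (A : Set (DiPath edge)) : Prop :=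
  ∀ a b : V, (∃ p ∈ A, ∃ l, p.verts = a :: b :: l) →
    ∀ β ∈ rel edge Y A, (∃ l₁ l₂, β.verts = l₁ ++ a :: b :: l₂) →
      ∃ q ∈ A, q.IsPrefix β ∧ ∃ l', q.verts = a :: b :: l'

/-- A path intervention is edge consistent for `Y` if its path set is live and consistent
for `Y` and all paths sharing the same first edge are assigned the same value. -/
def EdgeConsistentP {X : V → Type} (edge : V → V → Prop) (Y : Set V)
    (A : Set (DiPath edge)) (a : DiPath edge → ∀ u, X u) : Prop :=
  LiveSet edge Y A ∧ ConsistentP edge Y A ∧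
    ∀ p ∈ A, ∀ q ∈ A, p.firstEdge = q.firstEdge → a p p.src = a q p.src

/-- A directed path of a graph is a directed path of any supergraph. -/
def liftPath {edge edge' : V → V → Prop} (h : ∀ a b, edge a b → edge' a b)
    (p : DiPath edge) : DiPath edge' :=
  ⟨p.verts, p.ne, p.chain.imp (fun {a b} hab => h a b hab)⟩


section NaturalReductionAux

variable {edge : V → V → Prop} {X : V → Type}

theorem DiPath.ext' {p q : DiPath edge} (h : p.verts = q.verts) : p = q := by
  cases p; cases q; simp_all

theorem sink_mem (p : DiPath edge) : p.sink ∈ p.verts := List.getLast_mem p.ne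

theorem sink_of_concat {p : DiPath edge} {l : List V} {x : V}
    (h : p.verts = l ++ [x]) : p.sink = x := by
  have : p.sink = (l ++ [x]).getLast (by simp) := by
    simp only [DiPath.sink]
    congr 1
  rw [this, List.getLast_append_of_ne_nil _ (by simp : [x] ≠ [])]
  simp

theorem sink_of_pair {p : DiPath edge} {w v : V} (h : p.verts = [w, v]) : p.sink = v :=
  sink_of_concat (l := [w]) (by simpa using h)

theorem src_of_pair {p : DiPath edge} {w v : V} (h : p.verts = [w, v]) : p.src = w := by
  have : p.src = ([w, v] : List V).head (by simp) := by
    simp only [DiPath.src]; congr 1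
  simpa using this

theorem src_of_concat {p q : DiPath edge} {x : V} (h : p.verts = q.verts ++ [x]) :
    p.src = q.src := by
  have : p.src = (q.verts ++ [x]).head (by simp [q.ne]) := by
    simp only [DiPath.src]; congr 1
  rw [this, List.head_append_of_ne_nil q.ne]
  rfl

theorem chain'_transGen {l : List V} {a : V} (h : List.Chain' edge (a :: l)) :
    ∀ b ∈ l, Relation.TransGen edge a b := by
  induction l generalizing a with
  | nil => simp
  | cons c t ih =>
    intro b hb
    have hac : edge a c := (List.isChain_cons_cons.mp h).1
    rcases List.mem_cons.mp hb with rfl | hb'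
    · exact .single hac
    · exact (Relation.TransGen.single hac).trans (ih (List.isChain_cons_cons.mp h).2 b hb')

theorem nodup_of_acyclic (hG : Acyclic edge) (p : DiPath edge) : p.verts.Nodup := by
  have key : ∀ l : List V, List.Chain' edge l → l.Nodup := by
    intro l hl
    induction l with
    | nil => simp
    | cons a t ih =>
      refine List.nodup_cons.mpr ⟨fun ha => hG a (chain'_transGen hl a ha), ih hl.tail⟩
  exact key p.verts p.chain

theorem mem_funnel {A : Set (DiPath edge)} {w y : V} {q : DiPath edge} :
    q ∈ funnel w y A ↔
      (q ∈ A ∧ w ∉ q.verts) ∨ (q.sink = w ∧ ∃ p ∈ A, p.verts = q.verts ++ [y]) :=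
  Iff.rfl

theorem funnel_mono {A S : Set (DiPath edge)} (hsub : S ⊆ A) (w y : V) :
    funnel w y S ⊆ funnel w y A := by
  intro q hq
  rcases hq with ⟨hq, hwq⟩ | ⟨hqs, p, hp, hpv⟩
  · exact Or.inl ⟨hsub hq, hwq⟩
  · exact Or.inr ⟨hqs, p, hsub hp, hpv⟩

/-- The key invariant: no path of `A ∖ S` is a subpath of a path of `S`.  It is preserved
by the funnel operator. -/
theorem K_pres (hG : Acyclic edge) {A S : Set (DiPath edge)}
    (hK : ∀ q ∈ S, ∀ r ∈ A, r ∉ S → ¬ r.Subpath q) (w v : V) :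
    ∀ q ∈ funnel w v S, ∀ r ∈ funnel w v A, r ∉ funnel w v S → ¬ r.Subpath q := by
  intro q hq r hrA hrS hsp
  obtain ⟨l, rr, hlr⟩ := hsp
  rcases hrA with ⟨hrA', hwr⟩ | ⟨hrs, p, hpA, hpv⟩
  · have hrnS : r ∉ S := fun h => hrS (Or.inl ⟨h, hwr⟩)
    rcases hq with ⟨hqS, _⟩ | ⟨_, p', hp'S, hp'v⟩
    · exact hK q hqS r hrA' hrnS ⟨l, rr, hlr⟩
    · exact hK p' hp'S r hrA' hrnS ⟨l, rr ++ [v], by rw [hp'v, hlr]; simp⟩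
  · have hpnS : p ∉ S := fun h => hrS (Or.inr ⟨hrs, p, h, hpv⟩)
    rcases hq with ⟨hqS, hwq⟩ | ⟨hqs, p', hp'S, hp'v⟩
    · exact hwq (by
        rw [hlr]
        exact List.mem_append.mpr (Or.inl (List.mem_append.mpr (Or.inr (hrs ▸ sink_mem r)))))
    · have hnd : q.verts.Nodup := nodup_of_acyclic hG q
      have hrr : rr = [] := by
        by_contra hne
        have h1 : w ∈ r.verts := hrs ▸ sink_mem r
        have h2 : w ∈ rr := by
          have : q.verts.getLast q.ne = rr.getLast hne := by
            have : q.verts.getLast q.ne = ((l ++ r.verts) ++ rr).getLast (by simp [hne]) := by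
              simp only [hlr]
            rw [this, List.getLast_append_of_ne_nil _ hne]
          have hsk : q.sink = rr.getLast hne := this
          rw [hqs] at hsk
          rw [hsk]
          exact List.getLast_mem hne
        have hnd2 : (r.verts ++ rr).Nodup := by
          rw [hlr, List.append_assoc] at hnd
          exact hnd.of_append_right
        exact (List.disjoint_of_nodup_append hnd2) h1 h2
      subst hrr
      refine hK p' hp'S p hpA hpnS ⟨l, [], ?_⟩
      rw [hp'v, hlr, hpv]; simp
  
theorem ha_pres {A S : Set (DiPath edge)} (hsub : S ⊆ A)
    {a₁ a₂ : DiPath edge → ∀ u, X u} (ha : ∀ q ∈ S, a₁ q q.src = a₂ q q.src) (w v : V) :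
    ∀ q ∈ funnel w v S,
      funnelAssign w v A a₁ q q.src = funnelAssign w v S a₂ q q.src := by
  intro q hq
  rcases hq with ⟨hqS, hwq⟩ | ⟨hqs, p, hpS, hpv⟩
  · have hns : ¬ (q.sink = w ∧ ∃ p ∈ A, p.verts = q.verts ++ [v]) :=
      fun h => hwq (h.1 ▸ sink_mem q)
    have hns' : ¬ (q.sink = w ∧ ∃ p ∈ S, p.verts = q.verts ++ [v]) :=
      fun h => hwq (h.1 ▸ sink_mem q)
    rw [funnelAssign, dif_neg hns, funnelAssign, dif_neg hns']
    exact ha q hqS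
  · have h1 : q.sink = w ∧ ∃ p' ∈ A, p'.verts = q.verts ++ [v] := ⟨hqs, p, hsub hpS, hpv⟩
    have h2 : q.sink = w ∧ ∃ p' ∈ S, p'.verts = q.verts ++ [v] := ⟨hqs, p, hpS, hpv⟩
    rw [funnelAssign, dif_pos h1, funnelAssign, dif_pos h2]
    have e1 : h1.2.choose = p := DiPath.ext' (h1.2.choose_spec.2.trans hpv.symm)
    have e2 : h2.2.choose = p := DiPath.ext' (h2.2.choose_spec.2.trans hpv.symm)
    rw [e1, e2]
    exact src_of_concat hpv ▸ ha p hpS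

theorem observed_eq [Finite V] [∀ v, Nonempty (X v)] (hG : Acyclic edge)
    (C : CausalStructure V edge X) (v : V) :
    observed hG C v = fun ω => C.f v (fun w =>
      if _ : Relation.TransGen edge w v then observed hG C w ω
      else Classical.arbitrary (X w)) ω := by
  unfold observed
  rw [WellFounded.fix_eq]

theorem pathResp_eq [Finite V] [∀ v, Nonempty (X v)] (hG : Acyclic edge)
    (C : CausalStructure V edge X) (A : Set (DiPath edge)) (a : DiPath edge → ∀ u, X u)
    (v : V) :
    pathResp hG C A a v = fun ω => C.f v (fun w =>
      if h : ∃ p ∈ A, p.verts = [w, v] then a h.choose w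
      else if _ : Relation.TransGen edge w v then
        pathResp hG C (funnel w v A) (funnelAssign w v A a) w ω
      else Classical.arbitrary (X w)) ω := by
  unfold pathResp
  rw [WellFounded.fix_eq]

theorem pathRespNat_eq [Finite V] [∀ v, Nonempty (X v)] (hG : Acyclic edge)
    (C : CausalStructure V edge X) (A Astar : Set (DiPath edge))
    (a : DiPath edge → ∀ u, X u) (v : V) :
    pathRespNat hG C A Astar a v = fun ω => C.f v (fun w =>
      if h : ∃ p ∈ A, p.verts = [w, v] then
        (if h.choose ∈ Astar then a h.choose w else observed hG C w ω)
      else if _ : Relation.TransGen edge w v then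
        pathRespNat hG C (funnel w v A) (funnel w v Astar) (funnelAssign w v A a) w ω
      else Classical.arbitrary (X w)) ω := by
  unfold pathRespNat
  rw [WellFounded.fix_eq]

theorem pathResp_eq_observed [Finite V] [∀ v, Nonempty (X v)] (hG : Acyclic edge)
    (C : CausalStructure V edge X) :
    ∀ (v : V) (B : Set (DiPath edge)) (b : DiPath edge → ∀ u, X u),
      (∀ q ∈ B, q.sink ≠ v) → ∀ ω, pathResp hG C B b v ω = observed hG C v ω := by
  intro v
  induction v using (Acyclic.wf hG).induction with
  | _ v IH =>
    intro B b hB ω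
    rw [pathResp_eq, observed_eq]
    refine congrFun (C.localDep v _ _ fun w hw => ?_) ω
    have hw' : Relation.TransGen edge w v := .single hw
    have hne : ¬ ∃ p ∈ B, p.verts = [w, v] := by
      rintro ⟨p, hp, hpv⟩
      exact hB p hp (sink_of_pair hpv)
    rw [dif_neg hne, dif_pos hw', dif_pos hw']
    refine IH w hw' _ _ ?_ ω
    intro q hq
    rcases hq with ⟨hqB, hwq⟩ | ⟨hqs, p, hpB, hpv⟩
    · exact fun h => hwq (h ▸ sink_mem q)
    · exact absurd (sink_of_concat hpv) (hB p hpB)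

theorem key_main [Finite V] [∀ v, Nonempty (X v)] (hG : Acyclic edge)
    (C : CausalStructure V edge X) :
    ∀ (v : V) (A S : Set (DiPath edge)) (a₁ a₂ : DiPath edge → ∀ u, X u),
      S ⊆ A →
      (∀ q ∈ S, ∀ r ∈ A, r ∉ S → ¬ r.Subpath q) →
      (∀ q ∈ S, a₁ q q.src = a₂ q q.src) →
      ∀ ω, pathRespNat hG C A S a₁ v ω = pathResp hG C S a₂ v ω := by
  intro v
  induction v using (Acyclic.wf hG).induction with
  | _ v IH =>
    intro A S a₁ a₂ hsub hK ha ω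
    rw [pathRespNat_eq, pathResp_eq]
    refine congrFun (C.localDep v _ _ fun w hw => ?_) ω
    have hw' : Relation.TransGen edge w v := .single hw
    by_cases hA : ∃ p ∈ A, p.verts = [w, v]
    · rw [dif_pos hA]
      obtain ⟨hmem, hverts⟩ := hA.choose_spec
      by_cases hS : hA.choose ∈ S
      · have hS' : ∃ p ∈ S, p.verts = [w, v] := ⟨hA.choose, hS, hverts⟩
        rw [dif_pos hS', if_pos hS]
        have he : hS'.choose = hA.choose := DiPath.ext' (hS'.choose_spec.2.trans hverts.symm)
        have hsrc : hA.choose.src = w := src_of_pair hverts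
        rw [he]
        have hha := ha hA.choose hS
        rw [hsrc] at hha
        exact hha
      · have hS' : ¬ ∃ p ∈ S, p.verts = [w, v] := by
          rintro ⟨p, hp, hpv⟩
          exact hS (by rw [DiPath.ext' (hverts.trans hpv.symm)]; exact hp)
        rw [if_neg hS, dif_neg hS', dif_pos hw']
        refine (pathResp_eq_observed hG C w (funnel w v S) _ ?_ ω).symm
        intro q hq hsink
        rcases hq with ⟨hqS, hwq⟩ | ⟨hqs, p, hpS, hpv⟩
        · exact hwq (hsink ▸ sink_mem q)
        · refine hK p hpS hA.choose hmem hS ⟨q.verts.dropLast, [], ?_⟩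
          have hql : q.verts = q.verts.dropLast ++ [w] := by
            conv_lhs => rw [← List.dropLast_append_getLast q.ne]
            rw [← DiPath.sink, hqs]
          rw [hpv, hverts, hql]; simp
    · have hSn : ¬ ∃ p ∈ S, p.verts = [w, v] := fun ⟨p, hp, hpv⟩ => hA ⟨p, hsub hp, hpv⟩
      rw [dif_neg hA, dif_neg hSn, dif_pos hw', dif_pos hw']
      exact IH w hw' _ _ _ _ (funnel_mono hsub w v) (K_pres hG hK w v) (ha_pres hsub ha w v) ω

end NaturalReductionAux

/-- if a path intervention assigning constants on `𝛂* ⊆ 𝛂` and natural values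
on `𝛂 ∖ 𝛂*` is natural for `𝐘`, then the joint distribution of the responses of `𝐘` equals
that of the responses to the path intervention on `𝛂*` alone with the same constants. -/
theorem natural_reduction {V : Type} [Fintype V] {X : V → Type} [∀ v, Nonempty (X v)]
    {edge : V → V → Prop} (hG : Acyclic edge)
    (Y : Set V) (A Astar : Set (DiPath edge)) (hsub : Astar ⊆ A)
    (hproper : Proper A) (hlive : LiveSet edge Y A)
    (hnat : ∀ p ∈ rel edge Y Astar, (∃ q ∈ Astar, q.IsPrefix p) →
      ∀ r ∈ A, r ∉ Astar → ¬ r.Subpath p)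
    (C : CausalStructure V edge X) (a : DiPath edge → ∀ u, X u) :
    ∀ s : ∀ u, X u,
      C.μ {ω | ∀ y ∈ Y, pathRespNat hG C A Astar a y ω = s y} =
        C.μ {ω | ∀ y ∈ Y, pathResp hG C Astar a y ω = s y} := by
  intro s
  have hK : ∀ q ∈ Astar, ∀ r ∈ A, r ∉ Astar → ¬ r.Subpath q := by
    intro q hq r hrA hrS hsp
    obtain ⟨p, hp, hpre⟩ := hlive q (hsub hq)
    have hprel : p ∈ rel edge Y Astar := ⟨hp.1, fun β hβ hβsub => hp.2 β (hsub hβ) hβsub⟩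
    refine hnat p hprel ⟨q, hq, hpre⟩ r hrA hrS ?_
    obtain ⟨l, rr, hlr⟩ := hsp
    obtain ⟨t, ht⟩ := hpre
    exact ⟨l, rr ++ t, by rw [← ht, hlr]; simp⟩
  have hpt : ∀ y ω, pathRespNat hG C A Astar a y ω = pathResp hG C Astar a y ω :=
    fun y ω => key_main hG C y A Astar a a hsub hK (fun _ _ => rfl) ω
  congr 1
  ext ω
  simp only [Set.mem_setOf_eq]
  exact forall₂_congr fun y _ => by rw [hpt]

end CausalHierarchy
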